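/- Let Σ be symmetric positive definite in ℝ^{d×d} and R_c > 0. Define the clipping map x ↦ x · R_c/max(R_c, (xᵀΣ⁻¹x)^{1/2}) and let X ~ N(0, Σ). Then E[clip(X)·clip(X)ᵀ] = ρ̄ Σ, where ρ̄ = (1/(d(2π)^{d/2})) ∫_{ℝ^d} min(‖u‖², R_c²) e^{-‖u‖²/2} du, and 0 < ρ̄ ≤ 1. -/

import Mathlib

open MeasureTheory Real

lemma integrable_sq_gauss : Integrable (fun x : ℝ => x ^ 2 * Real.exp (-x ^ 2 / 2)) := by
  have h := integrable_rpow_mul_exp_neg_mul_sq (b := (1/2 : ℝ)) (by norm_num) (s := 2) (by norm_num)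
  simp_rw [Real.rpow_two] at h
  convert h using 2 with x
  ring_nf

lemma integrable_gauss1 : Integrable (fun x : ℝ => Real.exp (-x ^ 2 / 2)) := by
  have h := integrable_exp_neg_mul_sq (b := (1/2 : ℝ)) (by norm_num)
  convert h using 2 with x
  ring_nf

lemma integral_gauss1 : ∫ x : ℝ, Real.exp (-x ^ 2 / 2) = Real.sqrt (2 * Real.pi) := by
  have h := integral_gaussian (1/2 : ℝ)
  rw [show (π / (1/2 : ℝ)) = 2 * π by ring] at h
  rw [← h]
  congr 1 with x
  ring_nf

lemma integral_sq_gauss : ∫ x : ℝ, x ^ 2 * Real.exp (-x ^ 2 / 2) = Real.sqrt (2 * Real.pi) := by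
  have hf : ∀ x : ℝ, HasDerivAt (fun x : ℝ => -x * Real.exp (-x ^ 2 / 2))
      (x ^ 2 * Real.exp (-x ^ 2 / 2) - Real.exp (-x ^ 2 / 2)) x := by
    intro x
    have h1 : HasDerivAt (fun x : ℝ => -x ^ 2 / 2) (-x) x := by
      have := ((hasDerivAt_pow 2 x).neg).div_const 2
      refine this.congr_deriv ?_
      simp; ring
    have h2 := h1.exp
    have h3 := ((hasDerivAt_id x).neg).mul h2
    refine h3.congr_deriv ?_
    simp; ring
  have hint : Integrable (fun x : ℝ => x ^ 2 * Real.exp (-x ^ 2 / 2) - Real.exp (-x ^ 2 / 2)) :=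
    integrable_sq_gauss.sub integrable_gauss1
  have hf_int : Integrable (fun x : ℝ => -x * Real.exp (-x ^ 2 / 2)) := by
    have h := integrable_mul_exp_neg_mul_sq (b := (1/2 : ℝ)) (by norm_num)
    have : Integrable (fun x : ℝ => x * Real.exp (-x ^ 2 / 2)) := by
      convert h using 2 with x; ring_nf
    have h2 := this.neg
    convert h2 using 2 with x
    simp
  have h0 := integral_eq_zero_of_hasDerivAt_of_integrable hf hint hf_int
  rw [integral_sub integrable_sq_gauss integrable_gauss1, sub_eq_zero] at h0
  rw [h0, integral_gauss1]

open MeasureTheory Real Finset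

variable {d : ℕ}

lemma sum_div_half (x : Fin d → ℝ) :
    -(∑ k, x k ^ 2) / 2 = ∑ k, (-(x k ^ 2) / 2) := by
  rw [← Finset.sum_neg_distrib, ← Finset.sum_div]

lemma sq_exp_eq_prod (i : Fin d) (x : Fin d → ℝ) :
    x i ^ 2 * Real.exp (-(∑ k, x k ^ 2) / 2)
      = ∏ k, ((if k = i then x k ^ 2 else 1) * Real.exp (-(x k ^ 2) / 2)) := by
  rw [Finset.prod_mul_distrib, Finset.prod_ite_eq' Finset.univ i (fun k => x k ^ 2),
    if_pos (Finset.mem_univ i), ← Real.exp_sum, ← sum_div_half]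

lemma exp_eq_prod (x : Fin d → ℝ) :
    Real.exp (-(∑ k, x k ^ 2) / 2) = ∏ k, Real.exp (-(x k ^ 2) / 2) := by
  rw [← Real.exp_sum, ← sum_div_half]

lemma gauss1' : Integrable (fun t : ℝ => Real.exp (-(t ^ 2) / 2)) := integrable_gauss1

lemma integrable_exp_pi : Integrable (fun x : Fin d → ℝ => Real.exp (-(∑ k, x k ^ 2) / 2)) := by
  simp_rw [exp_eq_prod]
  exact Integrable.fintype_prod (f := fun _ t => Real.exp (-(t ^ 2) / 2)) fun _ => gauss1'

lemma integrable_sq_exp_pi (i : Fin d) :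
    Integrable (fun x : Fin d → ℝ => x i ^ 2 * Real.exp (-(∑ k, x k ^ 2) / 2)) := by
  simp_rw [sq_exp_eq_prod i]
  refine Integrable.fintype_prod
    (f := fun k t => (if k = i then t ^ 2 else 1) * Real.exp (-(t ^ 2) / 2)) fun k => ?_
  by_cases h : k = i
  · simp only [h, if_pos]
    exact integrable_sq_gauss
  · simp only [h, if_neg, one_mul, if_false]
    exact gauss1'

lemma second_moment_pi (i : Fin d) :
    ∫ x : Fin d → ℝ, x i ^ 2 * Real.exp (-(∑ k, x k ^ 2) / 2) = Real.sqrt (2 * π) ^ d := by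
  simp_rw [sq_exp_eq_prod i]
  rw [integral_fintype_prod_volume_eq_prod
    (f := fun k t => (if k = i then t ^ 2 else 1) * Real.exp (-(t ^ 2) / 2))]
  have hval : ∀ k : Fin d, (∫ t : ℝ, (if k = i then t ^ 2 else 1) * Real.exp (-(t ^ 2) / 2))
      = Real.sqrt (2 * π) := by
    intro k
    by_cases h : k = i
    · simp only [h, if_pos]
      exact integral_sq_gauss
    · simp only [h, if_neg, one_mul, if_false]
      exact integral_gauss1
  rw [Finset.prod_congr rfl (fun k _ => hval k), Finset.prod_const]
  simp

lemma norm_moment_pi :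
    ∫ x : Fin d → ℝ, (∑ k, x k ^ 2) * Real.exp (-(∑ k, x k ^ 2) / 2)
      = d * Real.sqrt (2 * π) ^ d := by
  have : ∀ x : Fin d → ℝ, (∑ k, x k ^ 2) * Real.exp (-(∑ k, x k ^ 2) / 2)
      = ∑ k, x k ^ 2 * Real.exp (-(∑ j, x j ^ 2) / 2) := fun x => Finset.sum_mul _ _ _
  simp_rw [this]
  rw [integral_finset_sum Finset.univ (fun k _ => integrable_sq_exp_pi k)]
  simp_rw [second_moment_pi]
  simp [mul_comm]

lemma integral_neg_coord (F : ℝ → ℝ) (hF : Continuous F) {i j : Fin d} (hij : i ≠ j) :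
    ∫ x : Fin d → ℝ, F (∑ k, x k ^ 2) * (x i * x j) = 0 := by
  set G : (Fin d → ℝ) → ℝ := fun x => F (∑ k, x k ^ 2) * (x i * x j) with hG
  have hGc : Continuous G := by
    apply Continuous.mul
    · exact hF.comp (continuous_finset_sum _ fun k _ => (continuous_apply k).pow 2)
    · exact (continuous_apply i).mul (continuous_apply j)
  set m : (Fin d → ℝ) → (Fin d → ℝ) := fun x k => if k = i then -x k else x k with hm
  have hmp : MeasurePreserving m volume volume := by
    refine volume_preserving_pi (f := fun (k : Fin d) (t : ℝ) => if k = i then -t else t) ?_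
    · intro k
      by_cases h : k = i
      · simp only [h, if_pos]
        exact Measure.measurePreserving_neg _
      · simp only [h, if_neg, if_false]
        exact MeasurePreserving.id _
  have key : ∀ x, G (m x) = -G x := by
    intro x
    have h1 : ∑ k, (m x k) ^ 2 = ∑ k, x k ^ 2 := by
      refine Finset.sum_congr rfl fun k _ => ?_
      by_cases h : k = i <;> simp [hm, h]
    have h2 : m x i = -x i := by simp [hm]
    have h3 : m x j = x j := by simp [hm, hij.symm]
    rw [hG]
    simp only [h1, h2, h3]
    ring
  have : ∫ x, G x = ∫ x, G (m x) := by
    conv_lhs => rw [← hmp.map_eq]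
    rw [integral_map hmp.measurable.aemeasurable hGc.aestronglyMeasurable]
  simp_rw [key, integral_neg] at this
  linarith

lemma integral_swap_coord (F : ℝ → ℝ) (hF : Continuous F) (i j : Fin d) :
    ∫ x : Fin d → ℝ, F (∑ k, x k ^ 2) * x i ^ 2
      = ∫ x : Fin d → ℝ, F (∑ k, x k ^ 2) * x j ^ 2 := by
  set e := MeasurableEquiv.arrowCongr' (Equiv.swap i j) (MeasurableEquiv.refl ℝ) with he
  have hmp : MeasurePreserving e volume volume :=
    volume_preserving_arrowCongr' _ _ (MeasurePreserving.id _)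
  have hGc : Continuous (fun x : Fin d → ℝ => F (∑ k, x k ^ 2) * x i ^ 2) := by
    apply Continuous.mul
    · exact hF.comp (continuous_finset_sum _ fun k _ => (continuous_apply k).pow 2)
    · exact (continuous_apply i).pow 2
  have : ∫ x : Fin d → ℝ, F (∑ k, x k ^ 2) * x i ^ 2
      = ∫ x : Fin d → ℝ, F (∑ k, (e x) k ^ 2) * (e x) i ^ 2 := by
    conv_lhs => rw [← hmp.map_eq]
    rw [integral_map hmp.measurable.aemeasurable hGc.aestronglyMeasurable]
  rw [this]
  congr 1 with x
  have happ : ∀ k, e x k = x (Equiv.swap i j k) := by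
    intro k
    simp [he, MeasurableEquiv.arrowCongr', Equiv.arrowCongr', Equiv.arrowCongr]
  have h1 : ∑ k, (e x k) ^ 2 = ∑ k, x k ^ 2 := by
    simp_rw [happ]
    exact Fintype.sum_equiv (Equiv.swap i j) _ _ (fun k => rfl)
  rw [h1, happ i, Equiv.swap_apply_left]

lemma clip_sq_mul {Rc : ℝ} (hRc : 0 < Rc) {r : ℝ} (hr : 0 ≤ r) :
    (Rc / max Rc (Real.sqrt r)) ^ 2 * r = min r (Rc ^ 2) := by
  rcases le_total (Real.sqrt r) Rc with h | h
  · rw [max_eq_left h, div_self hRc.ne', one_pow, one_mul, min_eq_left]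
    calc r = Real.sqrt r ^ 2 := (Real.sq_sqrt hr).symm
      _ ≤ Rc ^ 2 := pow_le_pow_left₀ (Real.sqrt_nonneg r) h 2
  · have hrpos : 0 < Real.sqrt r := lt_of_lt_of_le hRc h
    have hr0 : 0 < r := Real.sqrt_pos.mp hrpos
    rw [max_eq_right h, div_pow, Real.sq_sqrt hr, div_mul_cancel₀ _ hr0.ne', min_eq_right]
    calc Rc ^ 2 ≤ Real.sqrt r ^ 2 := pow_le_pow_left₀ hRc.le h 2
      _ = r := Real.sq_sqrt hr

lemma continuous_clipF {Rc : ℝ} (hRc : 0 < Rc) :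
    Continuous (fun r : ℝ => (Rc / max Rc (Real.sqrt r)) ^ 2 * Real.exp (-r / 2)) := by
  have h1 : Continuous fun r : ℝ => Rc / max Rc (Real.sqrt r) := by
    refine continuous_const.div (continuous_const.max Real.continuous_sqrt) fun r => ?_
    exact ne_of_gt (lt_of_lt_of_le hRc (le_max_left _ _))
  exact (h1.pow 2).mul ((continuous_neg.div_const 2).rexp)

lemma coord_abs_le (x : Fin d → ℝ) (i j : Fin d) : |x i * x j| ≤ ∑ k, x k ^ 2 := by
  have hs : ∀ l : Fin d, x l ^ 2 ≤ ∑ k, x k ^ 2 :=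
    fun l => Finset.single_le_sum (fun k _ => sq_nonneg (x k)) (Finset.mem_univ l)
  have habs : ∀ l : Fin d, |x l| ≤ Real.sqrt (∑ k, x k ^ 2) := by
    intro l
    rw [← Real.sqrt_sq_eq_abs]
    exact Real.sqrt_le_sqrt (hs l)
  calc |x i * x j| = |x i| * |x j| := abs_mul _ _
    _ ≤ Real.sqrt (∑ k, x k ^ 2) * Real.sqrt (∑ k, x k ^ 2) :=
        mul_le_mul (habs i) (habs j) (abs_nonneg _) (Real.sqrt_nonneg _)
    _ = ∑ k, x k ^ 2 := Real.mul_self_sqrt (Finset.sum_nonneg fun k _ => sq_nonneg (x k))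

lemma clipF_coord_bound {Rc : ℝ} (hRc : 0 < Rc) (x : Fin d → ℝ) (i j : Fin d) :
    |(Rc / max Rc (Real.sqrt (∑ k, x k ^ 2))) ^ 2 * Real.exp (-(∑ k, x k ^ 2) / 2)
        * (x i * x j)|
      ≤ Rc ^ 2 * Real.exp (-(∑ k, x k ^ 2) / 2) := by
  set n := ∑ k, x k ^ 2 with hn
  have hn0 : 0 ≤ n := Finset.sum_nonneg fun k _ => sq_nonneg (x k)
  have hF0 : 0 ≤ (Rc / max Rc (Real.sqrt n)) ^ 2 * Real.exp (-n / 2) := by positivity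
  rw [abs_mul, abs_of_nonneg hF0]
  calc (Rc / max Rc (Real.sqrt n)) ^ 2 * Real.exp (-n / 2) * |x i * x j|
      ≤ (Rc / max Rc (Real.sqrt n)) ^ 2 * Real.exp (-n / 2) * n :=
        mul_le_mul_of_nonneg_left (coord_abs_le x i j) hF0
    _ = min n (Rc ^ 2) * Real.exp (-n / 2) := by
        rw [mul_right_comm, clip_sq_mul hRc hn0]
    _ ≤ Rc ^ 2 * Real.exp (-n / 2) :=
        mul_le_mul_of_nonneg_right (min_le_right _ _) (Real.exp_nonneg _)

lemma integrable_clipF_coords {Rc : ℝ} (hRc : 0 < Rc) (i j : Fin d) :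
    Integrable (fun x : Fin d → ℝ =>
      (Rc / max Rc (Real.sqrt (∑ k, x k ^ 2))) ^ 2 * Real.exp (-(∑ k, x k ^ 2) / 2)
        * (x i * x j)) := by
  refine Integrable.mono' (integrable_exp_pi.const_mul (Rc ^ 2)) ?_
    (Filter.Eventually.of_forall fun x => ?_)
  · have hc : Continuous fun x : Fin d → ℝ =>
        (Rc / max Rc (Real.sqrt (∑ k, x k ^ 2))) ^ 2 * Real.exp (-(∑ k, x k ^ 2) / 2)
          * (x i * x j) := by
      have hn : Continuous fun x : Fin d → ℝ => ∑ k, x k ^ 2 :=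
        continuous_finset_sum _ fun k _ => (continuous_apply k).pow 2
      exact ((continuous_clipF hRc).comp hn).mul
        ((continuous_apply i).mul (continuous_apply j))
    exact hc.aestronglyMeasurable
  · rw [Real.norm_eq_abs]
    exact clipF_coord_bound hRc x i j

lemma integrable_min_exp {Rc : ℝ} (hRc : 0 < Rc) :
    Integrable (fun x : Fin d → ℝ =>
      min (∑ k, x k ^ 2) (Rc ^ 2) * Real.exp (-(∑ k, x k ^ 2) / 2)) := by
  refine Integrable.mono' (integrable_exp_pi.const_mul (Rc ^ 2)) ?_
    (Filter.Eventually.of_forall fun x => ?_)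
  · have hn : Continuous fun x : Fin d → ℝ => ∑ k, x k ^ 2 :=
      continuous_finset_sum _ fun k _ => (continuous_apply k).pow 2
    exact ((hn.min continuous_const).mul
      ((hn.neg.div_const 2).rexp)).aestronglyMeasurable
  · have hn0 : 0 ≤ ∑ k, x k ^ 2 := Finset.sum_nonneg fun k _ => sq_nonneg (x k)
    rw [Real.norm_eq_abs, abs_of_nonneg (by positivity)]
    exact mul_le_mul_of_nonneg_right (min_le_right _ _) (Real.exp_nonneg _)

lemma integrable_nsum_exp :
    Integrable (fun x : Fin d → ℝ =>
      (∑ k, x k ^ 2) * Real.exp (-(∑ k, x k ^ 2) / 2)) := by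
  have : ∀ x : Fin d → ℝ, (∑ k, x k ^ 2) * Real.exp (-(∑ k, x k ^ 2) / 2)
      = ∑ k, x k ^ 2 * Real.exp (-(∑ j, x j ^ 2) / 2) := fun x => Finset.sum_mul _ _ _
  simp_rw [this]
  exact integrable_finset_sum _ fun k _ => integrable_sq_exp_pi k

lemma M_pos (hd : 0 < d) {Rc : ℝ} (hRc : 0 < Rc) :
    0 < ∫ x : Fin d → ℝ, min (∑ k, x k ^ 2) (Rc ^ 2) * Real.exp (-(∑ k, x k ^ 2) / 2) := by
  rw [integral_pos_iff_support_of_nonneg_ae ?_ (integrable_min_exp hRc)]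
  · set U : Set (Fin d → ℝ) := {x | 0 < ∑ k, x k ^ 2} with hU
    have hUopen : IsOpen U := by
      have hn : Continuous fun x : Fin d → ℝ => ∑ k, x k ^ 2 :=
        continuous_finset_sum _ fun k _ => (continuous_apply k).pow 2
      exact isOpen_lt continuous_const hn
    have hUsub : U ⊆ Function.support fun x : Fin d → ℝ =>
        min (∑ k, x k ^ 2) (Rc ^ 2) * Real.exp (-(∑ k, x k ^ 2) / 2) := by
      intro x hx
      have h1 : 0 < min (∑ k, x k ^ 2) (Rc ^ 2) := lt_min hx (by positivity)
      exact ne_of_gt (mul_pos h1 (Real.exp_pos _))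
    have hUne : U.Nonempty := by
      refine ⟨fun _ => 1, ?_⟩
      simp only [hU, Set.mem_setOf_eq, one_pow, Finset.sum_const, Finset.card_univ,
        Fintype.card_fin, nsmul_eq_mul, mul_one]
      exact_mod_cast hd
    calc (0 : ENNReal) < volume U := hUopen.measure_pos volume hUne
      _ ≤ _ := measure_mono hUsub
  · refine Filter.Eventually.of_forall fun x => ?_
    have hn0 : 0 ≤ ∑ k, x k ^ 2 := Finset.sum_nonneg fun k _ => sq_nonneg (x k)
    positivity

lemma M_le {Rc : ℝ} (hRc : 0 < Rc) :
    (∫ x : Fin d → ℝ, min (∑ k, x k ^ 2) (Rc ^ 2) * Real.exp (-(∑ k, x k ^ 2) / 2))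
      ≤ d * Real.sqrt (2 * π) ^ d := by
  rw [← norm_moment_pi]
  refine integral_mono (integrable_min_exp hRc) integrable_nsum_exp fun x => ?_
  exact mul_le_mul_of_nonneg_right (min_le_left _ _) (Real.exp_nonneg _)

open scoped Matrix

lemma euclidean_transfer {d : ℕ} (F : (Fin d → ℝ) → ℝ) :
    (∫ u : EuclideanSpace ℝ (Fin d), F u) = ∫ x : Fin d → ℝ, F x :=
  (EuclideanSpace.volume_preserving_symm_measurableEquiv_toLp (Fin d)).integral_comp
    (MeasurableEquiv.measurableEmbedding _) F

lemma eunorm_sq {d : ℕ} (u : EuclideanSpace ℝ (Fin d)) : ‖u‖ ^ 2 = ∑ k, u k ^ 2 := by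
  rw [EuclideanSpace.norm_eq, Real.sq_sqrt (Finset.sum_nonneg fun k _ => by positivity)]
  simp [sq_abs]

lemma change_of_var {d : ℕ} (A : Matrix (Fin d) (Fin d) ℝ) (hA : A.det ≠ 0)
    (G : (Fin d → ℝ) → ℝ) (hG : Continuous G) :
    ∫ x : Fin d → ℝ, G x = |A.det| * ∫ y : Fin d → ℝ, G (A.mulVec y) := by
  have hmap : Measure.map (Matrix.toLin' A) volume = ENNReal.ofReal |A.det|⁻¹ • volume := by
    have := Measure.map_linearMap_addHaar_pi_eq_smul_addHaar
      (f := Matrix.toLin' A) (by rwa [LinearMap.det_toLin']) volume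
    simpa [LinearMap.det_toLin', abs_inv] using this
  have hL : Continuous (Matrix.toLin' A) := LinearMap.continuous_of_finiteDimensional _
  have h2 : ∫ z, G z ∂(Measure.map (Matrix.toLin' A) volume)
      = ∫ y, G (Matrix.toLin' A y) := integral_map hL.measurable.aemeasurable
    hG.stronglyMeasurable.aestronglyMeasurable
  have h3 : ∫ z, G z ∂(Measure.map (Matrix.toLin' A) volume) = |A.det|⁻¹ * ∫ z, G z := by
    rw [hmap, integral_smul_measure, ENNReal.toReal_ofReal (by positivity), smul_eq_mul]
  have h4 : ∫ y, G (A.mulVec y) = |A.det|⁻¹ * ∫ z, G z := by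
    simp_rw [← Matrix.toLin'_apply]
    rw [← h2, h3]
  rw [h4, ← mul_assoc, mul_inv_cancel₀ (abs_ne_zero.mpr hA), one_mul]

lemma rpow_half_eq {d : ℕ} : ((2 * Real.pi : ℝ) ^ ((d : ℝ) / 2)) = Real.sqrt (2 * Real.pi) ^ d := by
  rw [Real.sqrt_eq_rpow, ← Real.rpow_natCast ((2 * Real.pi) ^ (1/2 : ℝ)) d,
    ← Real.rpow_mul (by positivity)]
  norm_num
  congr 1
  ring

/-- Expectation of the outer product of the clipped Gaussian `N(0, S)`:
`E[clip(X) clip(X)ᵀ] = ρ̄ S` with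
`ρ̄ = (1/(d(2π)^{d/2})) ∫ min(‖u‖², R_c²) e^{-‖u‖²/2} du`, and `0 < ρ̄ ≤ 1`. -/
theorem clipped_gaussian_covariance
    {d : ℕ} (hd : 0 < d) (S : Matrix (Fin d) (Fin d) ℝ)
    (hS : S.PosDef) (Rc : ℝ) (hRc : 0 < Rc) :
    let p : EuclideanSpace ℝ (Fin d) → ℝ := fun x =>
      ((2 * Real.pi) ^ ((d : ℝ) / 2) * Real.sqrt S.det)⁻¹ *
        Real.exp (-(x ⬝ᵥ S⁻¹.mulVec x) / 2)
    let clip : EuclideanSpace ℝ (Fin d) → EuclideanSpace ℝ (Fin d) := fun x =>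
      (Rc / max Rc (Real.sqrt (x ⬝ᵥ S⁻¹.mulVec x))) • x
    let ρbar : ℝ :=
      (1 / ((d : ℝ) * (2 * Real.pi) ^ ((d : ℝ) / 2))) *
        ∫ u : EuclideanSpace ℝ (Fin d), min (‖u‖ ^ 2) (Rc ^ 2) * Real.exp (-‖u‖ ^ 2 / 2)
    (∀ i j : Fin d, (∫ x : EuclideanSpace ℝ (Fin d), p x * (clip x i * clip x j)) =
        ρbar * S i j) ∧ 0 < ρbar ∧ ρbar ≤ 1 := by
  intro p clip ρbar
  have hd' : (d : ℝ) ≠ 0 := Nat.cast_ne_zero.mpr hd.ne'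
  have hM : (∫ u : EuclideanSpace ℝ (Fin d), min (‖u‖ ^ 2) (Rc ^ 2) * Real.exp (-‖u‖ ^ 2 / 2))
      = ∫ x : Fin d → ℝ, min (∑ k, x k ^ 2) (Rc ^ 2) * Real.exp (-(∑ k, x k ^ 2) / 2) := by
    rw [← euclidean_transfer
      (fun x : Fin d → ℝ => min (∑ k, x k ^ 2) (Rc ^ 2) * Real.exp (-(∑ k, x k ^ 2) / 2))]
    congr 1 with u
    rw [eunorm_sq u]
  set Mv : ℝ := ∫ x : Fin d → ℝ, min (∑ k, x k ^ 2) (Rc ^ 2) * Real.exp (-(∑ k, x k ^ 2) / 2)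
    with hMv
  have hρ : ρbar = (1 / ((d : ℝ) * Real.sqrt (2 * π) ^ d)) * Mv := by
    simp only [ρbar]
    rw [hM, rpow_half_eq]
  have hMpos : 0 < Mv := M_pos hd hRc
  have hB : (0 : ℝ) < Real.sqrt (2 * π) ^ d :=
    pow_pos (Real.sqrt_pos.mpr (by positivity)) d
  refine ⟨?_, ?_, ?_⟩
  · intro i j
    simp only [p, clip]
    have hsmul : ∀ (c : ℝ) (x : EuclideanSpace ℝ (Fin d)) (k : Fin d),
        (c • x) k = c * x k := fun _ _ _ => rfl
    simp only [hsmul]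
    -- matrix square root facts
    obtain ⟨A, hAA, hAT⟩ : ∃ A : Matrix (Fin d) (Fin d) ℝ, A * A = S ∧ Aᵀ = A := by
      open scoped MatrixOrder in
      refine ⟨CFC.sqrt S, CFC.sqrt_mul_sqrt_self S hS.posSemidef.nonneg, ?_⟩
      have := (CFC.sqrt_nonneg S).1
      simpa [Matrix.IsHermitian] using this
    have hdetS : 0 < S.det := hS.det_pos
    have hdetA2 : A.det * A.det = S.det := by rw [← Matrix.det_mul, hAA]
    have hdetA : A.det ≠ 0 := by
      intro h
      rw [h, zero_mul] at hdetA2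
      exact hdetS.ne' hdetA2.symm
    have habs : |A.det| = Real.sqrt S.det := by rw [← hdetA2, Real.sqrt_mul_self_eq_abs]
    have hsqrtS : (0:ℝ) < Real.sqrt S.det := Real.sqrt_pos.mpr hdetS
    have hunit : IsUnit A.det := isUnit_iff_ne_zero.mpr hdetA
    have hASA : A * (S⁻¹ * A) = 1 := by
      rw [← hAA, Matrix.mul_inv_rev, Matrix.mul_assoc, Matrix.nonsing_inv_mul A hunit,
        Matrix.mul_one, Matrix.mul_nonsing_inv A hunit]
    have hquad : ∀ y : Fin d → ℝ, A.mulVec y ⬝ᵥ S⁻¹.mulVec (A.mulVec y) = ∑ k, y k ^ 2 := by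
      intro y
      rw [Matrix.mulVec_mulVec, show A.mulVec y = Matrix.vecMul y A by
          rw [← hAT, Matrix.mulVec_transpose, hAT], ← Matrix.dotProduct_mulVec,
        Matrix.mulVec_mulVec, hASA, Matrix.one_mulVec]
      simp [dotProduct, sq]
    -- continuity facts
    have hqc : Continuous fun x : Fin d → ℝ => x ⬝ᵥ S⁻¹.mulVec x := by
      simp only [dotProduct, Matrix.mulVec]
      exact continuous_finset_sum _ fun k _ => (continuous_apply k).mul
        (continuous_finset_sum _ fun l _ => continuous_const.mul (continuous_apply l))
    have hdiv : Continuous fun r : ℝ => Rc / max Rc (Real.sqrt r) := by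
      refine continuous_const.div (continuous_const.max Real.continuous_sqrt) fun r => ?_
      exact ne_of_gt (lt_of_lt_of_le hRc (le_max_left _ _))
    have hGc : Continuous fun x : Fin d → ℝ =>
        ((2 * π) ^ ((d:ℝ) / 2) * Real.sqrt S.det)⁻¹ * Real.exp (-(x ⬝ᵥ S⁻¹.mulVec x) / 2) *
          (Rc / max Rc (Real.sqrt (x ⬝ᵥ S⁻¹.mulVec x)) * x i *
            (Rc / max Rc (Real.sqrt (x ⬝ᵥ S⁻¹.mulVec x)) * x j)) := by
      have h2 : Continuous fun x : Fin d → ℝ =>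
          Rc / max Rc (Real.sqrt (x ⬝ᵥ S⁻¹.mulVec x)) := hdiv.comp hqc
      exact (continuous_const.mul ((hqc.neg.div_const 2).rexp)).mul
        ((h2.mul (continuous_apply i)).mul (h2.mul (continuous_apply j)))
    -- transfer to the pi space
    refine (euclidean_transfer (fun x : Fin d → ℝ =>
      ((2 * π) ^ ((d:ℝ) / 2) * Real.sqrt S.det)⁻¹ * Real.exp (-(x ⬝ᵥ S⁻¹.mulVec x) / 2) *
        (Rc / max Rc (Real.sqrt (x ⬝ᵥ S⁻¹.mulVec x)) * x i *
          (Rc / max Rc (Real.sqrt (x ⬝ᵥ S⁻¹.mulVec x)) * x j)))).trans ?_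
    rw [change_of_var A hdetA _ hGc]
    simp_rw [hquad]
    have hpt : ∀ y : Fin d → ℝ,
        ((2 * π) ^ ((d:ℝ)/2) * Real.sqrt S.det)⁻¹ * Real.exp (-(∑ k, y k ^ 2) / 2) *
            (Rc / max Rc (Real.sqrt (∑ k, y k ^ 2)) * A.mulVec y i *
              (Rc / max Rc (Real.sqrt (∑ k, y k ^ 2)) * A.mulVec y j))
          = ((2 * π) ^ ((d:ℝ)/2) * Real.sqrt S.det)⁻¹ *
              ((Rc / max Rc (Real.sqrt (∑ k, y k ^ 2))) ^ 2 * Real.exp (-(∑ k, y k ^ 2) / 2) *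
                (A.mulVec y i * A.mulVec y j)) := fun y => by ring
    simp_rw [hpt, integral_const_mul]
    have hmv : ∀ (y : Fin d → ℝ) (k : Fin d), A.mulVec y k = ∑ l, A k l * y l :=
      fun y k => by simp [Matrix.mulVec, dotProduct]
    simp_rw [hmv]
    have hexpand : ∀ y : Fin d → ℝ,
        (Rc / max Rc (Real.sqrt (∑ m, y m ^ 2))) ^ 2 * Real.exp (-(∑ m, y m ^ 2) / 2) *
            ((∑ k, A i k * y k) * (∑ l, A j l * y l))
          = ∑ k, ∑ l, A i k * A j l *
              ((Rc / max Rc (Real.sqrt (∑ m, y m ^ 2))) ^ 2 * Real.exp (-(∑ m, y m ^ 2) / 2) *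
                (y k * y l)) := by
      intro y
      rw [Finset.sum_mul_sum, Finset.mul_sum]
      refine Finset.sum_congr rfl fun k _ => ?_
      rw [Finset.mul_sum]
      exact Finset.sum_congr rfl fun l _ => by ring
    simp_rw [hexpand]
    rw [integral_finset_sum _ fun k _ => integrable_finset_sum _ fun l _ =>
      (integrable_clipF_coords hRc k l).const_mul _]
    rw [Finset.sum_congr rfl fun k (_ : k ∈ Finset.univ) => integral_finset_sum _ fun l _ =>
      (integrable_clipF_coords hRc k l).const_mul _]
    simp_rw [integral_const_mul]
    -- evaluate the double sum using symmetry
    have k0 : Fin d := ⟨0, hd⟩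
    have hdiagc : ∀ k : Fin d,
        (∫ y : Fin d → ℝ, (Rc / max Rc (Real.sqrt (∑ m, y m ^ 2))) ^ 2 *
            Real.exp (-(∑ m, y m ^ 2) / 2) * (y k * y k))
          = ∫ y : Fin d → ℝ, (Rc / max Rc (Real.sqrt (∑ m, y m ^ 2))) ^ 2 *
              Real.exp (-(∑ m, y m ^ 2) / 2) * y k0 ^ 2 := by
      intro k
      rw [show (fun y : Fin d → ℝ => (Rc / max Rc (Real.sqrt (∑ m, y m ^ 2))) ^ 2 *
          Real.exp (-(∑ m, y m ^ 2) / 2) * (y k * y k))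
          = fun y : Fin d → ℝ => (Rc / max Rc (Real.sqrt (∑ m, y m ^ 2))) ^ 2 *
            Real.exp (-(∑ m, y m ^ 2) / 2) * y k ^ 2 from funext fun y => by ring]
      exact integral_swap_coord (fun r => (Rc / max Rc (Real.sqrt r)) ^ 2 * Real.exp (-r / 2))
        (continuous_clipF hRc) k k0
    have hinner : ∀ k : Fin d,
        (∑ l, A i k * A j l * (∫ y : Fin d → ℝ,
            (Rc / max Rc (Real.sqrt (∑ m, y m ^ 2))) ^ 2 *
              Real.exp (-(∑ m, y m ^ 2) / 2) * (y k * y l)))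
          = A i k * A j k * ∫ y : Fin d → ℝ,
              (Rc / max Rc (Real.sqrt (∑ m, y m ^ 2))) ^ 2 *
                Real.exp (-(∑ m, y m ^ 2) / 2) * y k0 ^ 2 := by
      intro k
      rw [Finset.sum_eq_single k]
      · rw [hdiagc k]
      · intro l _ hlk
        have h0 : (∫ y : Fin d → ℝ, (Rc / max Rc (Real.sqrt (∑ m, y m ^ 2))) ^ 2 *
            Real.exp (-(∑ m, y m ^ 2) / 2) * (y k * y l)) = 0 :=
          integral_neg_coord (fun r => (Rc / max Rc (Real.sqrt r)) ^ 2 * Real.exp (-r / 2))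
            (continuous_clipF hRc) (Ne.symm hlk)
        rw [h0, mul_zero]
      · intro h; exact absurd (Finset.mem_univ k) h
    rw [Finset.sum_congr rfl fun k (_ : k ∈ Finset.univ) => hinner k]
    have hsum2 : (∑ k, A i k * A j k * ∫ y : Fin d → ℝ,
        (Rc / max Rc (Real.sqrt (∑ m, y m ^ 2))) ^ 2 *
          Real.exp (-(∑ m, y m ^ 2) / 2) * y k0 ^ 2)
        = S i j * ∫ y : Fin d → ℝ, (Rc / max Rc (Real.sqrt (∑ m, y m ^ 2))) ^ 2 *
            Real.exp (-(∑ m, y m ^ 2) / 2) * y k0 ^ 2 := by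
      rw [← Finset.sum_mul]
      congr 1
      calc ∑ k, A i k * A j k = (A * Aᵀ) i j := by
            simp [Matrix.mul_apply, Matrix.transpose_apply]
        _ = S i j := by rw [hAT, hAA]
    rw [hsum2]
    -- the diagonal integral equals Mv / d
    have hknorm : (d : ℝ) * (∫ y : Fin d → ℝ, (Rc / max Rc (Real.sqrt (∑ m, y m ^ 2))) ^ 2 *
        Real.exp (-(∑ m, y m ^ 2) / 2) * y k0 ^ 2) = Mv := by
      have h1 : ∀ k : Fin d, (∫ y : Fin d → ℝ,
          (Rc / max Rc (Real.sqrt (∑ m, y m ^ 2))) ^ 2 *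
            Real.exp (-(∑ m, y m ^ 2) / 2) * y k ^ 2)
          = ∫ y : Fin d → ℝ, (Rc / max Rc (Real.sqrt (∑ m, y m ^ 2))) ^ 2 *
              Real.exp (-(∑ m, y m ^ 2) / 2) * y k0 ^ 2 :=
        fun k => integral_swap_coord (fun r => (Rc / max Rc (Real.sqrt r)) ^ 2 *
          Real.exp (-r / 2)) (continuous_clipF hRc) k k0
      have h2 : (∑ k : Fin d, ∫ y : Fin d → ℝ,
          (Rc / max Rc (Real.sqrt (∑ m, y m ^ 2))) ^ 2 *
            Real.exp (-(∑ m, y m ^ 2) / 2) * y k ^ 2)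
          = (d : ℝ) * ∫ y : Fin d → ℝ, (Rc / max Rc (Real.sqrt (∑ m, y m ^ 2))) ^ 2 *
              Real.exp (-(∑ m, y m ^ 2) / 2) * y k0 ^ 2 := by
        rw [Finset.sum_congr rfl fun k _ => h1 k, Finset.sum_const, Finset.card_univ,
          Fintype.card_fin, nsmul_eq_mul]
      rw [← h2, ← integral_finset_sum _ fun k (_ : k ∈ Finset.univ) =>
        ((integrable_clipF_coords hRc k k).congr
          (Filter.Eventually.of_forall fun y => by ring))]
      rw [hMv]
      congr 1 with y
      rw [← Finset.mul_sum]
      have hn0 : (0:ℝ) ≤ ∑ m, y m ^ 2 := Finset.sum_nonneg fun m _ => sq_nonneg _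
      rw [mul_right_comm, clip_sq_mul hRc hn0]
    have hCint : (∫ y : Fin d → ℝ, (Rc / max Rc (Real.sqrt (∑ m, y m ^ 2))) ^ 2 *
        Real.exp (-(∑ m, y m ^ 2) / 2) * y k0 ^ 2) = Mv / d := by
      rw [← hknorm]
      field_simp
    rw [hCint, hρ, habs, rpow_half_eq]
    field_simp
  · rw [hρ]
    have : (0:ℝ) < (d : ℝ) * Real.sqrt (2 * π) ^ d := by positivity
    positivity
  · rw [hρ, one_div_mul_eq_div, div_le_one (by positivity)]
    calc Mv ≤ d * Real.sqrt (2 * π) ^ d := M_le hRc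
      _ = (d : ℝ) * Real.sqrt (2 * π) ^ d := rfl
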